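/- In an intra-regular AG-groupoid S with left identity, a fuzzy subset μ is a fuzzy left ideal if and only if it is a fuzzy right ideal. -/
import Mathlib


/-- In an intra-regular AG-groupoid with left identity, fuzzy left
    ideals coincide with fuzzy right ideals. -/
theorem fuzzy_left_iff_right {S : Type*} (mul : S → S → S)
    (hinv : ∀ a b c : S, mul (mul a b) c = mul (mul c b) a)
    (e : S) (he : ∀ x : S, mul e x = x)
    (hintra : ∀ a : S, ∃ x y : S, a = mul (mul x (mul a a)) y)
    (μ : S → ℝ) (hμ0 : ∀ x, 0 ≤ μ x) (hμ1 : ∀ x, μ x ≤ 1) :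
    (∀ u v : S, μ v ≤ μ (mul u v)) ↔ (∀ u v : S, μ u ≤ μ (mul u v)) := by
  -- medial law
  have hmed : ∀ a b c d : S,
      mul (mul a b) (mul c d) = mul (mul a c) (mul b d) := by
    intro a b c d
    rw [hinv a b (mul c d), hinv c d b, hinv (mul b d) c a]
  -- a(bc) = b(ac)
  have hL2 : ∀ a b c : S, mul a (mul b c) = mul b (mul a c) := by
    intro a b c
    calc mul a (mul b c) = mul (mul e a) (mul b c) := by rw [he]
      _ = mul (mul e b) (mul a c) := hmed e a b c
      _ = mul b (mul a c) := by rw [he]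
  constructor
  · -- left ideal → right ideal
    intro h a b
    obtain ⟨x, y, hx⟩ := hintra a
    have key : mul a b = mul a (mul x (mul (mul b y) a)) := by
      calc mul a b = mul (mul (mul x (mul a a)) y) b := by rw [← hx]
        _ = mul (mul b y) (mul x (mul a a)) := hinv _ _ _
        _ = mul x (mul (mul b y) (mul a a)) := hL2 _ _ _
        _ = mul x (mul a (mul (mul b y) a)) := by rw [hL2 (mul b y) a a]
        _ = mul a (mul x (mul (mul b y) a)) := hL2 _ _ _
    rw [key]
    calc μ a ≤ μ (mul (mul b y) a) := h _ _
      _ ≤ μ (mul x (mul (mul b y) a)) := h _ _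
      _ ≤ μ (mul a (mul x (mul (mul b y) a))) := h _ _
  · -- right ideal → left ideal
    intro h a b
    obtain ⟨x, y, hx⟩ := hintra b
    have key : mul a b = mul (mul b (mul x b)) (mul a y) := by
      calc mul a b = mul a (mul (mul x (mul b b)) y) := by rw [← hx]
        _ = mul (mul x (mul b b)) (mul a y) := hL2 _ _ _
        _ = mul (mul b (mul x b)) (mul a y) := by rw [hL2 x b b]
    rw [key]
    calc μ b ≤ μ (mul b (mul x b)) := h _ _
      _ ≤ μ (mul (mul b (mul x b)) (mul a y)) := h _ _
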